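/- In the binary system (β = 2), if K is an odd natural number and X is any natural number, then the multi-number carry value transformation of K copies of X equals the sum of K − 1 of the numbers: CVT_2(X, X, …, X) [K copies] = (K − 1)·X. -/

import Mathlib

/-- The `i`-th base-`β` digit of `X`. -/
def digit (β X i : ℕ) : ℕ := X / β ^ i % β

/-- Column sum at digit position `i` of a list of naturals in base `β`. -/
def colSum (β : ℕ) (L : List ℕ) (i : ℕ) : ℕ := (L.map fun X => digit β X i).sum

/-- Multi-number XOR in base `β`. -/
noncomputable def XORb (β : ℕ) (L : List ℕ) : ℕ := ∑ᶠ i : ℕ, (colSum β L i % β) * β ^ i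

/-- Multi-number carry value transformation in base `β`. -/
noncomputable def CVTb (β : ℕ) (L : List ℕ) : ℕ := ∑ᶠ i : ℕ, (colSum β L i / β) * β ^ (i + 1)

lemma sum_digits (X n : ℕ) : ∑ i ∈ Finset.range n, digit 2 X i * 2 ^ i = X % 2 ^ n := by
  induction n with
  | zero => simp [Nat.mod_one]
  | succ n ih =>
    rw [Finset.sum_range_succ, ih, pow_succ, Nat.mod_mul]
    simp [digit]
    ring

lemma colSum_rep (K X i : ℕ) : colSum 2 (List.replicate K X) i = K * digit 2 X i := by
  simp [colSum, List.map_replicate, List.sum_replicate, smul_eq_mul]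

theorem stmt_6 (K X : ℕ) (hK : Odd K) :
    CVTb 2 (List.replicate K X) = (K - 1) * X := by
  obtain ⟨m, rfl⟩ := hK
  obtain ⟨n, hn⟩ : ∃ n, X < 2 ^ n := ⟨X, Nat.lt_two_pow_self (n := X)⟩
  have hterm : ∀ i, colSum 2 (List.replicate (2 * m + 1) X) i / 2 * 2 ^ (i + 1)
      = 2 * m * (digit 2 X i * 2 ^ i) := by
    intro i
    rw [colSum_rep]
    have hd : digit 2 X i = 0 ∨ digit 2 X i = 1 := by
      have := Nat.mod_lt (X / 2 ^ i) (show 0 < 2 by norm_num)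
      unfold digit; omega
    rcases hd with h | h
    · simp [h]
    · rw [h, one_mul, mul_one]
      have h2 : (2 * m + 1) / 2 = m := by omega
      rw [h2, pow_succ]
      ring
  have hsupp : (Function.support fun i =>
      colSum 2 (List.replicate (2 * m + 1) X) i / 2 * 2 ^ (i + 1)) ⊆ ↑(Finset.range n) := by
    intro i hi
    simp only [Finset.coe_range, Set.mem_Iio]
    by_contra h
    push_neg at h
    have : X / 2 ^ i = 0 := Nat.div_eq_of_lt (lt_of_lt_of_le hn (Nat.pow_le_pow_right (by norm_num) h))
    apply hi
    simp [colSum_rep, digit, this]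
  rw [CVTb, finsum_eq_finset_sum_of_support_subset _ hsupp]
  calc ∑ i ∈ Finset.range n, colSum 2 (List.replicate (2 * m + 1) X) i / 2 * 2 ^ (i + 1)
      = ∑ i ∈ Finset.range n, 2 * m * (digit 2 X i * 2 ^ i) := by
        exact Finset.sum_congr rfl fun i _ => hterm i
    _ = 2 * m * (X % 2 ^ n) := by rw [← Finset.mul_sum, sum_digits]
    _ = (2 * m + 1 - 1) * X := by rw [Nat.mod_eq_of_lt hn, Nat.add_sub_cancel]
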